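/- (Theorem A) Let E be a compact metric space, Ω = E^ℕ, p a fully supported Borel probability measure on E, f ∈ C(Ω), L_f the Ruelle operator, λ_f = exp(P(f)), and ν ∈ G*(f). Let T : L¹(Ω, ν) → L¹(Ω, ν) be the bounded linear operator extending L_f, i.e., T maps the class of φ to the class of L_f φ for every φ ∈ C(Ω). Then there exists ξ ∈ (L¹(Ω, ν))** such that: (i) T** ξ = λ_f ξ; (ii) ξ is positive, i.e., ξ(g) ≥ 0 for every g ∈ (L¹(Ω, ν))* satisfying g(φ) ≥ 0 for all φ ∈ L¹(Ω, ν) with φ ≥ 0 ν-a.e.; and (iii) ξ(ν̂) = 1, where ν̂ ∈ (L¹(Ω, ν))* is the functional φ ↦ ∫_Ω φ dν. -/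

import Mathlib

open MeasureTheory Filter Topology NormedSpace

noncomputable section

/-- The sequence `(a, x₁, x₂, …)` obtained by prepending `a` to `x`. -/
def cons {E : Type*} (a : E) (x : ℕ → E) : ℕ → E := fun n => Nat.casesOn n a x

/-- **Theorem A.** Let `ν ∈ G*(f)` and let `S` be the bounded extension of the
Ruelle operator to `L¹(Ω, ν)`. Then there exists a positive `ξ ∈ (L¹(Ω, ν))**` with
`S** ξ = λ_f ξ` and `ξ(ν̂) = 1`, where `ν̂ : φ ↦ ∫ φ dν`. -/
theorem exists_positive_eigenvector_bidual_L1
    {E : Type*} [MetricSpace E] [CompactSpace E] [MeasurableSpace E] [BorelSpace E]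
    (p : Measure E) [IsProbabilityMeasure p]
    (hp : ∀ U : Set E, IsOpen U → U.Nonempty → 0 < p U)
    (f : C(ℕ → E, ℝ))
    (T : C(ℕ → E, ℝ) →L[ℝ] C(ℕ → E, ℝ))
    (hT : ∀ (φ : C(ℕ → E, ℝ)) (x : ℕ → E),
      T φ x = ∫ a, Real.exp (f (cons a x)) * φ (cons a x) ∂p)
    (P : ℝ)
    (hP : TendstoUniformly (fun (n : ℕ) (x : ℕ → E) => Real.log ((T ^ n) 1 x) / n)
      (fun _ => P) atTop)
    (ν : Measure (ℕ → E)) [IsProbabilityMeasure ν]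
    (hν : ∀ φ : C(ℕ → E, ℝ), ∫ x, T φ x ∂ν = Real.exp P * ∫ x, φ x ∂ν)
    (S : Lp ℝ 1 ν →L[ℝ] Lp ℝ 1 ν)
    (hS : ∀ φ : C(ℕ → E, ℝ),
      S (ContinuousMap.toLp 1 ν ℝ φ) = ContinuousMap.toLp 1 ν ℝ (T φ)) :
    ∃ ξ : StrongDual ℝ (StrongDual ℝ (Lp ℝ 1 ν)),
      (∀ g : StrongDual ℝ (Lp ℝ 1 ν), ξ (g.comp S) = Real.exp P * ξ g) ∧
      (∀ g : StrongDual ℝ (Lp ℝ 1 ν), (∀ φ : Lp ℝ 1 ν, 0 ≤ φ → 0 ≤ g φ) → 0 ≤ ξ g) ∧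
      (∀ νhat : StrongDual ℝ (Lp ℝ 1 ν), (∀ φ : Lp ℝ 1 ν, νhat φ = ∫ x, φ x ∂ν) → ξ νhat = 1) := by
  classical
  set lam := Real.exp P with hlam_def
  have hlam : 0 < lam := Real.exp_pos P
  -- the continuous functions T^n 1
  set w : ℕ → C(ℕ → E, ℝ) := fun n => (T ^ n) 1 with hw_def
  have hwsucc : ∀ n, w (n + 1) = T (w n) := by
    intro n
    simp only [hw_def, pow_succ']
    rfl
  have hw0 : ∀ n x, 0 ≤ w n x := by
    intro n
    induction n with
    | zero => intro x; simp [hw_def]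
    | succ n ih =>
      intro x
      rw [hwsucc, hT]
      exact integral_nonneg fun a => mul_nonneg (Real.exp_pos _).le (ih _)
  have hwint : ∀ n, ∫ x, w n x ∂ν = lam ^ n := by
    intro n
    induction n with
    | zero => simp [hw_def]
    | succ n ih =>
      rw [hwsucc, hν, ih, pow_succ]
      ring
  -- the L¹ elements u n = lam^{-n} • toLp (w n)
  set u : ℕ → Lp ℝ 1 ν := fun n => (lam ^ n)⁻¹ • ContinuousMap.toLp 1 ν ℝ (w n) with hu_def
  have hu_coe : ∀ n, ⇑(u n) =ᵐ[ν] fun x => (lam ^ n)⁻¹ * w n x := by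
    intro n
    filter_upwards [Lp.coeFn_smul ((lam ^ n)⁻¹) (ContinuousMap.toLp 1 ν ℝ (w n)),
      ContinuousMap.coeFn_toLp (𝕜 := ℝ) (p := 1) (μ := ν) (w n)] with x h1 h2
    rw [h1, Pi.smul_apply, smul_eq_mul, h2]
  have hu_nonneg : ∀ n, 0 ≤ u n := by
    intro n
    rw [← Lp.coeFn_nonneg]
    filter_upwards [hu_coe n] with x hx
    rw [hx]
    exact mul_nonneg (inv_nonneg.2 (pow_nonneg hlam.le n)) (hw0 n x)
  have hu_int : ∀ n, ∫ x, (u n) x ∂ν = 1 := by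
    intro n
    rw [integral_congr_ae (hu_coe n), integral_const_mul, hwint]
    field_simp
  have hu_norm : ∀ n, ‖u n‖ = 1 := by
    intro n
    rw [L1.norm_eq_integral_norm]
    have heq : (fun a => ‖(u n) a‖) =ᵐ[ν] fun a => (u n) a := by
      filter_upwards [hu_coe n] with x hx
      rw [hx, Real.norm_eq_abs, abs_of_nonneg
        (mul_nonneg (inv_nonneg.2 (pow_nonneg hlam.le n)) (hw0 n x)), ← hx]
    rw [integral_congr_ae heq]
    exact hu_int n
  have hSu : ∀ n, S (u n) = lam • u (n + 1) := by
    intro n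
    show S ((lam ^ n)⁻¹ • ContinuousMap.toLp 1 ν ℝ (w n))
        = lam • ((lam ^ (n + 1))⁻¹ • ContinuousMap.toLp 1 ν ℝ (w (n + 1)))
    rw [ContinuousLinearMap.map_smul, hS, ← hwsucc, smul_smul]
    congr 1
    rw [pow_succ, mul_inv]
    field_simp
  -- Cesàro averages
  set v : ℕ → Lp ℝ 1 ν := fun N => (N : ℝ)⁻¹ • ∑ n ∈ Finset.range N, u n with hv_def
  have smul_nn : ∀ (c : ℝ), 0 ≤ c → ∀ x : Lp ℝ 1 ν, 0 ≤ x → 0 ≤ c • x := by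
    intro c hc x hx
    rw [← Lp.coeFn_nonneg] at hx ⊢
    filter_upwards [hx, Lp.coeFn_smul c x] with a ha hs
    rw [hs, Pi.smul_apply, smul_eq_mul]
    exact mul_nonneg hc ha
  have hv_nonneg : ∀ N, 0 ≤ v N := by
    intro N
    have hsum : 0 ≤ ∑ n ∈ Finset.range N, u n :=
      Finset.sum_nonneg fun n _ => hu_nonneg n
    exact smul_nn _ (by positivity) _ hsum
  have hv_norm : ∀ N, ‖v N‖ ≤ 1 := by
    intro N
    rcases Nat.eq_zero_or_pos N with h | h
    · subst h; simp [hv_def]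
    · rw [hv_def]
      calc ‖(N : ℝ)⁻¹ • ∑ n ∈ Finset.range N, u n‖
          ≤ (N : ℝ)⁻¹ * ∑ n ∈ Finset.range N, ‖u n‖ := by
            rw [norm_smul, Real.norm_eq_abs, abs_of_nonneg (by positivity)]
            gcongr
            exact norm_sum_le _ _
        _ = 1 := by
            simp only [hu_norm, Finset.sum_const, Finset.card_range, nsmul_eq_mul, mul_one]
            field_simp
  have hSv : ∀ N, S (v N) = lam • v N + ((N : ℝ)⁻¹ * lam) • (u N - u 0) := by
    intro N
    have hshift : ∑ n ∈ Finset.range N, u (n + 1)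
        = (∑ n ∈ Finset.range N, u n) + (u N - u 0) := by
      have h1 := Finset.sum_range_succ' u N
      have h2 := Finset.sum_range_succ u N
      rw [h2] at h1
      have h3 : ∑ n ∈ Finset.range N, u (n + 1)
          = (∑ n ∈ Finset.range N, u n) + u N - u 0 := eq_sub_of_add_eq h1.symm
      rw [h3]; abel
    calc S (v N) = (N : ℝ)⁻¹ • ∑ n ∈ Finset.range N, S (u n) := by
          rw [hv_def, ContinuousLinearMap.map_smul, map_sum]
      _ = (N : ℝ)⁻¹ • (lam • ∑ n ∈ Finset.range N, u (n + 1)) := by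
          simp only [hSu]
          rw [← Finset.smul_sum]
      _ = lam • v N + ((N : ℝ)⁻¹ * lam) • (u N - u 0) := by
          rw [hshift, hv_def]
          module
  -- ultrafilter extending atTop
  set U : Ultrafilter ℕ := Ultrafilter.of atTop with hU_def
  have hUle : (U : Filter ℕ) ≤ atTop := Ultrafilter.of_le _
  -- convergence of g (v N) along U
  have hconv : ∀ g : StrongDual ℝ (Lp ℝ 1 ν),
      ∃ c : ℝ, Tendsto (fun N => g (v N)) U (𝓝 c) := by
    intro g
    have hmem : ∀ N, g (v N) ∈ Set.Icc (-‖g‖) ‖g‖ := by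
      intro N
      have := g.le_opNorm (v N)
      have h1 : |g (v N)| ≤ ‖g‖ := by
        rw [← Real.norm_eq_abs]
        calc ‖g (v N)‖ ≤ ‖g‖ * ‖v N‖ := this
          _ ≤ ‖g‖ * 1 := mul_le_mul_of_nonneg_left (hv_norm N) (norm_nonneg g)
          _ = ‖g‖ := mul_one _
      constructor
      · linarith [neg_abs_le (g (v N))]
      · linarith [le_abs_self (g (v N))]
    obtain ⟨c, _, hc⟩ := (isCompact_Icc (a := -‖g‖) (b := ‖g‖)).ultrafilter_le_nhds
      (U.map fun N => g (v N))
      (by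
        rw [Ultrafilter.coe_map, le_principal_iff, mem_map]
        exact Filter.univ_mem' fun N => hmem N)
    exact ⟨c, by rwa [Tendsto, ← Ultrafilter.coe_map]⟩
  choose xi hxi using hconv
  have huniq : ∀ (g : StrongDual ℝ (Lp ℝ 1 ν)) (c : ℝ),
      Tendsto (fun N => g (v N)) U (𝓝 c) → xi g = c := fun g c hc =>
    tendsto_nhds_unique (hxi g) hc
  -- ξ as a continuous linear functional
  have hadd : ∀ g₁ g₂ : StrongDual ℝ (Lp ℝ 1 ν), xi (g₁ + g₂) = xi g₁ + xi g₂ := by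
    intro g₁ g₂
    refine huniq _ _ ?_
    have := (hxi g₁).add (hxi g₂)
    simpa using this
  have hsmul : ∀ (c : ℝ) (g : StrongDual ℝ (Lp ℝ 1 ν)), xi (c • g) = c * xi g := by
    intro c g
    refine huniq _ _ ?_
    have := (hxi g).const_mul c
    simpa using this
  have hbound : ∀ g : StrongDual ℝ (Lp ℝ 1 ν), ‖xi g‖ ≤ 1 * ‖g‖ := by
    intro g
    rw [one_mul, Real.norm_eq_abs]
    refine abs_le.2 ⟨?_, ?_⟩
    · refine ge_of_tendsto (hxi g) (Filter.univ_mem' fun N => ?_)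
      have := g.le_opNorm (v N)
      have h1 : ‖g (v N)‖ ≤ ‖g‖ := by
        calc ‖g (v N)‖ ≤ ‖g‖ * ‖v N‖ := this
          _ ≤ ‖g‖ * 1 := mul_le_mul_of_nonneg_left (hv_norm N) (norm_nonneg g)
          _ = ‖g‖ := mul_one _
      rw [Real.norm_eq_abs] at h1
      show -‖g‖ ≤ g (v N)
      linarith [neg_abs_le (g (v N))]
    · refine le_of_tendsto (hxi g) (Filter.univ_mem' fun N => ?_)
      have := g.le_opNorm (v N)
      have h1 : ‖g (v N)‖ ≤ ‖g‖ := by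
        calc ‖g (v N)‖ ≤ ‖g‖ * ‖v N‖ := this
          _ ≤ ‖g‖ * 1 := mul_le_mul_of_nonneg_left (hv_norm N) (norm_nonneg g)
          _ = ‖g‖ := mul_one _
      rw [Real.norm_eq_abs] at h1
      show g (v N) ≤ ‖g‖
      linarith [le_abs_self (g (v N))]
  refine ⟨LinearMap.mkContinuous
    { toFun := xi
      map_add' := hadd
      map_smul' := hsmul } 1 hbound, ?_, ?_, ?_⟩
  · -- eigenvector property
    intro g
    show xi (g.comp S) = lam * xi g
    refine huniq _ _ ?_
    have hkey : ∀ N, (g.comp S) (v N)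
        = lam * g (v N) + ((N : ℝ)⁻¹ * lam) * (g (u N) - g (u 0)) := by
      intro N
      simp only [ContinuousLinearMap.comp_apply, hSv N, map_add, _root_.map_smul,
        map_sub, smul_eq_mul]
    rw [show (fun N => (g.comp S) (v N))
        = fun N => lam * g (v N) + ((N : ℝ)⁻¹ * lam) * (g (u N) - g (u 0)) from
      funext hkey]
    have h1 : Tendsto (fun N => lam * g (v N)) U (𝓝 (lam * xi g)) :=
      (hxi g).const_mul lam
    have h2 : Tendsto (fun N : ℕ => ((N : ℝ)⁻¹ * lam) * (g (u N) - g (u 0))) atTop (𝓝 0) := by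
      have hb : ∀ N : ℕ, ‖((N : ℝ)⁻¹ * lam) * (g (u N) - g (u 0))‖
          ≤ (lam * (2 * ‖g‖)) * (N : ℝ)⁻¹ := by
        intro N
        have hgb : ∀ n, ‖g (u n)‖ ≤ ‖g‖ := by
          intro n
          calc ‖g (u n)‖ ≤ ‖g‖ * ‖u n‖ := g.le_opNorm _
            _ = ‖g‖ := by rw [hu_norm, mul_one]
        rw [norm_mul, norm_mul, Real.norm_eq_abs (lam), abs_of_nonneg hlam.le,
          Real.norm_eq_abs ((N : ℝ)⁻¹), abs_of_nonneg (by positivity)]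
        have : ‖g (u N) - g (u 0)‖ ≤ 2 * ‖g‖ := by
          calc ‖g (u N) - g (u 0)‖ ≤ ‖g (u N)‖ + ‖g (u 0)‖ := norm_sub_le _ _
            _ ≤ ‖g‖ + ‖g‖ := add_le_add (hgb N) (hgb 0)
            _ = 2 * ‖g‖ := by ring
        calc (N : ℝ)⁻¹ * lam * ‖g (u N) - g (u 0)‖
            ≤ (N : ℝ)⁻¹ * lam * (2 * ‖g‖) := by gcongr
          _ = (lam * (2 * ‖g‖)) * (N : ℝ)⁻¹ := by ring
      refine squeeze_zero_norm hb ?_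
      have : Tendsto (fun N : ℕ => (N : ℝ)⁻¹) atTop (𝓝 0) := tendsto_inv_atTop_zero.comp
        tendsto_natCast_atTop_atTop
      simpa using this.const_mul (lam * (2 * ‖g‖))
    have h2' : Tendsto (fun N : ℕ => ((N : ℝ)⁻¹ * lam) * (g (u N) - g (u 0))) U (𝓝 0) :=
      h2.mono_left hUle
    simpa using h1.add h2'
  · -- positivity
    intro g hg
    show 0 ≤ xi g
    refine ge_of_tendsto (hxi g) (Filter.univ_mem' fun N => hg _ (hv_nonneg N))
  · -- normalization
    intro νhat hνhat
    show xi νhat = 1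
    refine huniq _ _ ?_
    have hev : ∀ᶠ N in (U : Filter ℕ), νhat (v N) = 1 := by
      refine hUle (eventually_atTop.2 ⟨1, fun N hN => ?_⟩)
      have hlin : νhat (v N) = (N : ℝ)⁻¹ * ∑ n ∈ Finset.range N, νhat (u n) := by
        rw [hv_def, _root_.map_smul, map_sum, smul_eq_mul]
      rw [hlin]
      have h1 : ∀ n, νhat (u n) = 1 := fun n => by rw [hνhat, hu_int]
      simp only [h1, Finset.sum_const, Finset.card_range, nsmul_eq_mul, mul_one]
      have hN0 : (N : ℝ) ≠ 0 := Nat.cast_ne_zero.2 (by omega)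
      field_simp
    exact Tendsto.congr' (hev.mono fun N h => h.symm) tendsto_const_nhds
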